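/- arXiv:1903.04415 — 2 statements merged into one kernel-verified Lean document; each statement's English description precedes it below -/
import Mathlib

section
/- Let Ω ⊂ ℝ^(2n+1−k) be open, φ : Ω → ℝ^k continuous, and a ∈ Ω. If φ is intrinsic differentiable at a, then for every j = 1,…,2n−k the ∂^{φ_j}-derivative ∂^{φ_j}φ(a) exists and its i-th component equals [J^φφ(a)]_{i,j} for every i = 1,…,k; in particular the limit lim_{s→0} (φ(γ(s)) − φ(a))/s has the same value for every integral curve γ of W_j^φ with γ(0) = a. -/
open scoped BigOperators
open MeasureTheory Filter Topology

noncomputable section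

namespace HeisGraph

/-! ### Points of the Heisenberg group ℍⁿ, identified with ℝ^{2n+1} -/

/-- Index type for the coordinates of a point of ℍⁿ: `x`-coordinates, `y`-coordinates
and the vertical coordinate `t`. -/
abbrev HIdxT (n : ℕ) := Sum (Fin n) (Sum (Fin n) Unit)

/-- ℍⁿ as a Euclidean space (so that the Euclidean norm is available). -/
abbrev HP (n : ℕ) := EuclideanSpace ℝ (HIdxT n)

variable {n k : ℕ}

def xPart (p : HP n) (i : Fin n) : ℝ := p (Sum.inl i)
def yPart (p : HP n) (i : Fin n) : ℝ := p (Sum.inr (Sum.inl i))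
def tPart (p : HP n) : ℝ := p (Sum.inr (Sum.inr ()))

def mkH (x y : Fin n → ℝ) (t : ℝ) : HP n :=
  WithLp.toLp 2 (fun i => Sum.elim x (Sum.elim y (fun _ => t)) i)

/-- The Heisenberg group product on ℝ^{2n+1}. -/
def hMul (p q : HP n) : HP n :=
  mkH (fun i => xPart p i + xPart q i) (fun i => yPart p i + yPart q i)
    (tPart p + tPart q + (1 / 2) * ∑ i : Fin n, (xPart p i * yPart q i - xPart q i * yPart p i))

/-- The Heisenberg group inverse: `p⁻¹ = -p`. -/
def hInv (p : HP n) : HP n := -p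

/-- The intrinsic dilations of ℍⁿ. -/
def dilH (lam : ℝ) (p : HP n) : HP n :=
  mkH (fun i => lam * xPart p i) (fun i => lam * yPart p i) (lam ^ 2 * tPart p)

/-- The homogeneous norm `‖p‖_∞ = max { |(x,y)| , |t|^{1/2} }`. -/
def normH (p : HP n) : ℝ :=
  max (Real.sqrt (∑ i, xPart p i ^ 2 + ∑ i, yPart p i ^ 2)) (Real.sqrt |tPart p|)

/-- The homogeneous distance `d_∞(p,q) = ‖q⁻¹ · p‖_∞`. -/
def dInf (p q : HP n) : ℝ := normH (hMul (hInv q) p)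

/-! ### Points of 𝕄 ≅ ℝ^{2n+1-k}: coordinates (v_{k+1..n}, η_{1..k}, w_{k+1..n}, τ) -/

abbrev MIdxT (n k : ℕ) := Sum (Fin (n - k)) (Sum (Fin k) (Sum (Fin (n - k)) Unit))

abbrev MP (n k : ℕ) := EuclideanSpace ℝ (MIdxT n k)

def vPart (a : MP n k) (j : Fin (n - k)) : ℝ := a (Sum.inl j)
def etaPart (a : MP n k) (i : Fin k) : ℝ := a (Sum.inr (Sum.inl i))
def wPart (a : MP n k) (j : Fin (n - k)) : ℝ := a (Sum.inr (Sum.inr (Sum.inl j)))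
def tauPart (a : MP n k) : ℝ := a (Sum.inr (Sum.inr (Sum.inr ())))

def mkM (v : Fin (n - k) → ℝ) (η : Fin k → ℝ) (w : Fin (n - k) → ℝ) (τ : ℝ) : MP n k :=
  WithLp.toLp 2 (fun i => Sum.elim v (Sum.elim η (Sum.elim w (fun _ => τ))) i)

/-- The embedding `i : ℝ^{2n+1-k} → ℍⁿ` onto the subgroup 𝕄 (`k` zeros among the
`x`-coordinates first). -/
def iota (a : MP n k) : HP n :=
  mkH (fun i => if h : (i : ℕ) < k then 0 else vPart a ⟨(i : ℕ) - k, by have := i.isLt; omega⟩)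
    (fun i => if h : (i : ℕ) < k then etaPart a ⟨(i : ℕ), h⟩
      else wPart a ⟨(i : ℕ) - k, by have := i.isLt; omega⟩)
    (tauPart a)

/-- The embedding `j : ℝ^k → ℍⁿ` onto the horizontal subgroup ℍ. -/
def jmap (h : EuclideanSpace ℝ (Fin k)) : HP n :=
  mkH (fun i => if hi : (i : ℕ) < k then h ⟨(i : ℕ), hi⟩ else 0) (fun _ => 0) 0

/-- The projection `π_𝕄 : ℍⁿ → 𝕄` determined by the unique factorization `p = m·h`,
`m ∈ 𝕄`, `h ∈ ℍ` (written in the coordinates of `MP n k`). -/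
def piM (hk : k ≤ n) (p : HP n) : MP n k :=
  mkM (fun j => xPart p ⟨(j : ℕ) + k, by have := j.isLt; omega⟩)
    (fun i => yPart p ⟨(i : ℕ), lt_of_lt_of_le i.isLt hk⟩)
    (fun j => yPart p ⟨(j : ℕ) + k, by have := j.isLt; omega⟩)
    (tPart p + (1 / 2) * ∑ i : Fin k,
      xPart p ⟨(i : ℕ), lt_of_lt_of_le i.isLt hk⟩ * yPart p ⟨(i : ℕ), lt_of_lt_of_le i.isLt hk⟩)

/-- The unit vertical vector of `MP n k`. -/
def tauUnit : MP n k := mkM 0 0 0 1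

/-- The product `⋆` induced on ℝ^{2n+1-k} by the group structure of 𝕄. -/
def starMul (a b : MP n k) : MP n k :=
  a + b + ((1 / 2) * ∑ j : Fin (n - k), (vPart a j * wPart b j - vPart b j * wPart a j)) • tauUnit

/-- The dilations `δ_λ^⋆` induced on ℝ^{2n+1-k}. -/
def dilStar (lam : ℝ) (a : MP n k) : MP n k :=
  mkM (fun j => lam * vPart a j) (fun i => lam * etaPart a i) (fun j => lam * wPart a j)
    (lam ^ 2 * tauPart a)

/-- The homogeneous norm of 𝕄 read on `MP n k` (it equals `normH (iota a)`). -/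
def normM (a : MP n k) : ℝ :=
  max (Real.sqrt (∑ j, vPart a j ^ 2 + ∑ i, etaPart a i ^ 2 + ∑ j, wPart a j ^ 2))
    (Real.sqrt |tauPart a|)

/-- The graph map `Φ(a) = i(a) · j(φ(a))`. -/
def graphMap (φ : MP n k → EuclideanSpace ℝ (Fin k)) (a : MP n k) : HP n :=
  hMul (iota a) (jmap (φ a))

/-- The graph distance `d_φ(a,b) = ‖π_𝕄(Φ(b)⁻¹ · Φ(a))‖_∞`. -/
def dPhi (hk : k ≤ n) (φ : MP n k → EuclideanSpace ℝ (Fin k)) (a b : MP n k) : ℝ :=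
  normM (piM hk (hMul (hInv (graphMap φ b)) (graphMap φ a)))

/-- `L : ℝ^{2n+1-k} → ℝ^k` is ⋆-linear: a homomorphism for `⋆`, homogeneous of degree 1
for the dilations `δ_λ^⋆`. -/
def IsStarLinear (L : MP n k → EuclideanSpace ℝ (Fin k)) : Prop :=
  (∀ a b, L (starMul a b) = L a + L b) ∧ ∀ lam > (0 : ℝ), ∀ a, L (dilStar lam a) = lam • L a

/-! ### Horizontal coordinates, matrices, cubes -/

/-- Index type for the `2n-k` horizontal coordinates of `MP n k` (τ deleted). -/
abbrev HorIdx (n k : ℕ) := Sum (Fin (n - k)) (Sum (Fin k) (Fin (n - k)))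

/-- The projection `π` deleting the vertical coordinate τ. -/
def piHor (a : MP n k) : HorIdx n k → ℝ :=
  Sum.elim (fun j => vPart a j) (Sum.elim (fun i => etaPart a i) (fun j => wPart a j))

/-- The ⋆-linear map associated to a `k × (2n-k)` matrix: `L(a) = M · π(a)`. -/
def ofMatrix (M : Matrix (Fin k) (HorIdx n k) ℝ) (a : MP n k) : EuclideanSpace ℝ (Fin k) :=
  WithLp.toLp 2 (fun i => M.mulVec (piHor a) i)

/-- The open coordinate cube `I_r(a)`. -/
def cube (r : ℝ) (a : MP n k) : Set (MP n k) := {p | ∀ i, |p i - a i| < r}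

/-- The closed coordinate cube `cl(I_r(a))`. -/
def closedCube (r : ℝ) (a : MP n k) : Set (MP n k) := {p | ∀ i, |p i - a i| ≤ r}

/-! ### Intrinsic differentiability -/

/-- The quantitative condition expressing uniform intrinsic differentiability of `φ`
at `a₀` (relative to `Ω`) with intrinsic differential `L`:
`lim_{r→0} sup_{a,b ∈ I_r(a₀)∩Ω} |φ(b) - φ(a) - L(a⁻¹ ⋆ b)| / d_φ(b,a) = 0`. -/
def UIDcond (hk : k ≤ n) (Ω : Set (MP n k)) (φ : MP n k → EuclideanSpace ℝ (Fin k))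
    (a₀ : MP n k) (L : MP n k → EuclideanSpace ℝ (Fin k)) : Prop :=
  ∀ ε > (0 : ℝ), ∃ r > (0 : ℝ), ∀ a ∈ cube r a₀ ∩ Ω, ∀ b ∈ cube r a₀ ∩ Ω,
    ‖φ b - φ a - L (starMul (-a) b)‖ ≤ ε * dPhi hk φ b a

/-- `φ` is uniformly intrinsic differentiable at `a₀`. -/
def UIDAt (hk : k ≤ n) (Ω : Set (MP n k)) (φ : MP n k → EuclideanSpace ℝ (Fin k))
    (a₀ : MP n k) : Prop :=
  ∃ L, IsStarLinear L ∧ UIDcond hk Ω φ a₀ L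

/-- `φ` is uniformly intrinsic differentiable at `a₀` with intrinsic Jacobian matrix `M`. -/
def UIDAtWith (hk : k ≤ n) (Ω : Set (MP n k)) (φ : MP n k → EuclideanSpace ℝ (Fin k))
    (a₀ : MP n k) (M : Matrix (Fin k) (HorIdx n k) ℝ) : Prop :=
  UIDcond hk Ω φ a₀ (ofMatrix M)

/-- The condition expressing intrinsic differentiability of `φ` at `a₀` with intrinsic
differential `L`: `lim_{a→a₀} |φ(a) - φ(a₀) - L(a₀⁻¹ ⋆ a)| / d_φ(a,a₀) = 0`. -/
def IDcond (hk : k ≤ n) (Ω : Set (MP n k)) (φ : MP n k → EuclideanSpace ℝ (Fin k))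
    (a₀ : MP n k) (L : MP n k → EuclideanSpace ℝ (Fin k)) : Prop :=
  ∀ ε > (0 : ℝ), ∃ δ > (0 : ℝ), ∀ a ∈ Ω, ‖a - a₀‖ < δ →
    ‖φ a - φ a₀ - L (starMul (-a₀) a)‖ ≤ ε * dPhi hk φ a a₀

/-- `φ` is intrinsic differentiable at `a₀`. -/
def IDAt (hk : k ≤ n) (Ω : Set (MP n k)) (φ : MP n k → EuclideanSpace ℝ (Fin k))
    (a₀ : MP n k) : Prop :=
  ∃ L, IsStarLinear L ∧ IDcond hk Ω φ a₀ L

/-- `φ` is intrinsic differentiable at `a₀` with intrinsic Jacobian matrix `M`. -/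
def IDAtWith (hk : k ≤ n) (Ω : Set (MP n k)) (φ : MP n k → EuclideanSpace ℝ (Fin k))
    (a₀ : MP n k) (M : Matrix (Fin k) (HorIdx n k) ℝ) : Prop :=
  IDcond hk Ω φ a₀ (ofMatrix M)

/-! ### The vector fields `W_j^φ` -/

/-- The `2n-k` vector fields `W^φ` on `MP n k`:
`W_j^φ = ∂_{v_j} - (1/2) w_j ∂_τ`, `∇^{φ_i} = ∂_{η_i} + φ_i ∂_τ`,
`W^φ = ∂_{w_j} + (1/2) v_j ∂_τ`. -/
def Wfield (φ : MP n k → EuclideanSpace ℝ (Fin k)) (ℓ : HorIdx n k) (p : MP n k) : MP n k :=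
  match ℓ with
  | Sum.inl j => mkM (Pi.single j 1) 0 0 (-(1 / 2) * wPart p j)
  | Sum.inr (Sum.inl i) => mkM 0 (Pi.single i 1) 0 (φ p i)
  | Sum.inr (Sum.inr j) => mkM 0 0 (Pi.single j 1) ((1 / 2) * vPart p j)

/-- For `ψ` of class C¹ (Euclidean sense), the intrinsic Jacobian matrix
`J^ψψ(m) = [(W_ℓ^ψ ψ_i)(m)]_{i,ℓ}`. -/
def JC1 (ψ : MP n k → EuclideanSpace ℝ (Fin k)) (m : MP n k) :
    Matrix (Fin k) (HorIdx n k) ℝ :=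
  Matrix.of fun i ℓ => fderiv ℝ ψ m (Wfield ψ ℓ m) i

/-- `φ` has `∂^{φ_ℓ}`-derivative `D` at `a`: along every integral curve of `W_ℓ^φ`
through `a` the difference quotients of `φ` converge to `D`. -/
def HasWDerivAt (Ω : Set (MP n k)) (φ : MP n k → EuclideanSpace ℝ (Fin k)) (ℓ : HorIdx n k)
    (a : MP n k) (D : EuclideanSpace ℝ (Fin k)) : Prop :=
  ∀ δ > (0 : ℝ), ∀ γ : ℝ → MP n k, γ 0 = a →
    (∀ s ∈ Set.Ioo (-δ) δ, γ s ∈ Ω) →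
    (∀ s ∈ Set.Ioo (-δ) δ, HasDerivAt γ (Wfield φ ℓ (γ s)) s) →
    Tendsto (fun s : ℝ => s⁻¹ • (φ (γ s) - φ a)) (𝓝[≠] (0 : ℝ)) (𝓝 D)

/-- The little-½-Hölder condition on `Ω`. -/
def LittleHolder (Ω : Set (MP n k)) (φ : MP n k → EuclideanSpace ℝ (Fin k)) : Prop :=
  ∀ Ω' : Set (MP n k), IsOpen Ω' → IsCompact (closure Ω') → closure Ω' ⊆ Ω →
    ∀ ε > (0 : ℝ), ∃ r > (0 : ℝ), ∀ a ∈ Ω', ∀ b ∈ Ω', a ≠ b → ‖a - b‖ ≤ r →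
      ‖φ a - φ b‖ ≤ ε * Real.sqrt ‖a - b‖

/-! ### `C¹_ℍ` functions on ℍⁿ -/

/-- The horizontal vector fields `X_i`, `Y_i` of ℍⁿ. -/
def Zfield (i : Sum (Fin n) (Fin n)) (p : HP n) : HP n :=
  match i with
  | Sum.inl i => mkH (Pi.single i 1) 0 (-(1 / 2) * yPart p i)
  | Sum.inr i => mkH 0 (Pi.single i 1) ((1 / 2) * xPart p i)

/-- `f : U → ℝ^k` is of class `C¹_ℍ` with horizontal derivatives `Df`: `f` is continuous
on `U`, the `Df p i` are continuous on `U` and represent the distributional derivatives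
of `f` along the horizontal vector fields. -/
def C1H (U : Set (HP n)) (f : HP n → EuclideanSpace ℝ (Fin k))
    (Df : HP n → Sum (Fin n) (Fin n) → EuclideanSpace ℝ (Fin k)) : Prop :=
  ContinuousOn f U ∧ (∀ i, ContinuousOn (fun p => Df p i) U) ∧
    ∀ (i : Sum (Fin n) (Fin n)) (j : Fin k) (ψ : HP n → ℝ),
      ContDiff ℝ (⊤ : ℕ∞) ψ → HasCompactSupport ψ → tsupport ψ ⊆ U →
      (∫ p in U, f p j * fderiv ℝ ψ p (Zfield i p)) = -∫ p in U, Df p i j * ψ p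

/-! ### The quasi-distance ρ_φ -/

/-- The function `ρ_φ(a,b)`. -/
def rhoPhi (φ : MP n k → EuclideanSpace ℝ (Fin k)) (a b : MP n k) : ℝ :=
  max
    (Real.sqrt (∑ j, (vPart a j - vPart b j) ^ 2 + ∑ i, (etaPart a i - etaPart b i) ^ 2 +
      ∑ j, (wPart a j - wPart b j) ^ 2))
    (Real.sqrt |tauPart a - tauPart b +
      (1 / 2) * ∑ i, (φ a i + φ b i) * (etaPart b i - etaPart a i) +
      (1 / 2) * ∑ j, (vPart a j * wPart b j - vPart b j * wPart a j)|)

/-! ### Families of exponential maps -/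

/-- A family of exponential maps for `φ` near `a`, as in Definition 4.2 of the paper. -/
structure ExpFamily (Ω : Set (MP n k)) (φ : MP n k → EuclideanSpace ℝ (Fin k))
    (a : MP n k) where
  δ₁ : ℝ
  δ₂ : ℝ
  pos : 0 < δ₂
  lt : δ₂ < δ₁
  sub : closedCube δ₁ a ⊆ Ω
  E : HorIdx n k → ℝ → MP n k → MP n k
  ω : HorIdx n k → MP n k → EuclideanSpace ℝ (Fin k)
  maps : ∀ ℓ, ∀ s ∈ Set.Icc (-δ₂) δ₂, ∀ b ∈ closedCube δ₂ a, E ℓ s b ∈ closedCube δ₁ a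
  start : ∀ ℓ, ∀ b ∈ closedCube δ₂ a, E ℓ 0 b = b
  isIntegral : ∀ ℓ, ∀ b ∈ closedCube δ₂ a, ∀ s ∈ Set.Icc (-δ₂) δ₂,
    HasDerivAt (fun r => E ℓ r b) (Wfield φ ℓ (E ℓ s b)) s
  contOmega : ∀ ℓ (i : Fin k), ContinuousOn (fun b => ω ℓ b i) Ω
  chain : ∀ ℓ, ∀ b ∈ closedCube δ₂ a, ∀ s ∈ Set.Icc (-δ₂) δ₂, ∀ i : Fin k,
    φ (E ℓ s b) i - φ b i = ∫ r in (0 : ℝ)..s, ω ℓ (E ℓ r b) i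

/-! ### Auxiliary lemmas -/

section Aux

@[simp] lemma xPart_mkH (x y : Fin n → ℝ) (t : ℝ) (i : Fin n) : xPart (mkH x y t) i = x i := rfl
@[simp] lemma yPart_mkH (x y : Fin n → ℝ) (t : ℝ) (i : Fin n) : yPart (mkH x y t) i = y i := rfl
@[simp] lemma tPart_mkH (x y : Fin n → ℝ) (t : ℝ) : tPart (mkH x y t) = t := rfl

@[simp] lemma vPart_mkM (v : Fin (n-k) → ℝ) (η : Fin k → ℝ) (w : Fin (n-k) → ℝ) (τ : ℝ)
    (j : Fin (n-k)) : vPart (mkM v η w τ) j = v j := rfl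
@[simp] lemma etaPart_mkM (v : Fin (n-k) → ℝ) (η : Fin k → ℝ) (w : Fin (n-k) → ℝ) (τ : ℝ)
    (i : Fin k) : etaPart (mkM v η w τ) i = η i := rfl
@[simp] lemma wPart_mkM (v : Fin (n-k) → ℝ) (η : Fin k → ℝ) (w : Fin (n-k) → ℝ) (τ : ℝ)
    (j : Fin (n-k)) : wPart (mkM v η w τ) j = w j := rfl
@[simp] lemma tauPart_mkM (v : Fin (n-k) → ℝ) (η : Fin k → ℝ) (w : Fin (n-k) → ℝ) (τ : ℝ) :
    tauPart (mkM v η w τ) = τ := rfl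

@[simp] lemma xPart_hInv (p : HP n) (i : Fin n) : xPart (hInv p) i = -(xPart p i) := rfl
@[simp] lemma yPart_hInv (p : HP n) (i : Fin n) : yPart (hInv p) i = -(yPart p i) := rfl
@[simp] lemma tPart_hInv (p : HP n) : tPart (hInv p) = -(tPart p) := rfl

lemma sum_split (hk : k ≤ n) (F : Fin n → ℝ) :
    ∑ i, F i = (∑ i : Fin k, F (Fin.castLE hk i)) +
      ∑ j : Fin (n - k), F ⟨(j : ℕ) + k, by omega⟩ := by
  have h : k + (n - k) = n := by omega
  have := Fintype.sum_equiv ((finSumFinEquiv (m := k) (n := n - k)).trans (finCongr h))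
    (fun i => F (((finSumFinEquiv (m := k) (n := n - k)).trans (finCongr h)) i)) F (fun _ => rfl)
  rw [← this, Fintype.sum_sum_type]
  congr 1
  all_goals apply Finset.sum_congr rfl; intro i _; congr 1; ext; simp; try omega

end Aux
section Graph

@[simp] lemma xPart_hMul (p q : HP n) (i : Fin n) :
    xPart (hMul p q) i = xPart p i + xPart q i := rfl
@[simp] lemma yPart_hMul (p q : HP n) (i : Fin n) :
    yPart (hMul p q) i = yPart p i + yPart q i := rfl
lemma tPart_hMul (p q : HP n) : tPart (hMul p q) =
    tPart p + tPart q + (1 / 2) * ∑ i : Fin n, (xPart p i * yPart q i - xPart q i * yPart p i) :=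
  rfl

lemma xPart_graphMap_lo (hk : k ≤ n) (φ : MP n k → EuclideanSpace ℝ (Fin k)) (a : MP n k)
    (i : Fin k) : xPart (graphMap φ a) (Fin.castLE hk i) = φ a i := by
  have h : ((Fin.castLE hk i : Fin n) : ℕ) < k := i.isLt
  show xPart (iota a) _ + xPart (jmap (φ a)) _ = _
  rw [show xPart (iota a) (Fin.castLE hk i) = 0 from dif_pos h,
    show xPart (jmap (φ a)) (Fin.castLE hk i) = φ a ⟨_, h⟩ from dif_pos h]
  simp

lemma xPart_graphMap_hi (hk : k ≤ n) (φ : MP n k → EuclideanSpace ℝ (Fin k)) (a : MP n k)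
    (j : Fin (n - k)) : xPart (graphMap φ a) ⟨(j : ℕ) + k, by omega⟩ = vPart a j := by
  have h : ¬ ((⟨(j : ℕ) + k, by omega⟩ : Fin n) : ℕ) < k := by simp
  show xPart (iota a) _ + xPart (jmap (φ a)) _ = _
  rw [show xPart (iota a) ⟨(j : ℕ) + k, by omega⟩ = vPart a ⟨(j : ℕ) + k - k, by omega⟩ from
    dif_neg h, show xPart (jmap (φ a)) ⟨(j : ℕ) + k, by omega⟩ = 0 from dif_neg h]
  simp

lemma yPart_graphMap_lo (hk : k ≤ n) (φ : MP n k → EuclideanSpace ℝ (Fin k)) (a : MP n k)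
    (i : Fin k) : yPart (graphMap φ a) (Fin.castLE hk i) = etaPart a i := by
  have h : ((Fin.castLE hk i : Fin n) : ℕ) < k := i.isLt
  show yPart (iota a) _ + yPart (jmap (φ a)) _ = _
  rw [show yPart (iota a) (Fin.castLE hk i) = etaPart a ⟨_, h⟩ from dif_pos h]
  show etaPart a _ + 0 = _
  simp

lemma yPart_graphMap_hi (hk : k ≤ n) (φ : MP n k → EuclideanSpace ℝ (Fin k)) (a : MP n k)
    (j : Fin (n - k)) : yPart (graphMap φ a) ⟨(j : ℕ) + k, by omega⟩ = wPart a j := by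
  have h : ¬ ((⟨(j : ℕ) + k, by omega⟩ : Fin n) : ℕ) < k := by simp
  show yPart (iota a) _ + yPart (jmap (φ a)) _ = _
  rw [show yPart (iota a) ⟨(j : ℕ) + k, by omega⟩ = wPart a ⟨(j : ℕ) + k - k, by omega⟩ from
    dif_neg h]
  show wPart a _ + 0 = _
  simp

lemma tPart_graphMap (hk : k ≤ n) (φ : MP n k → EuclideanSpace ℝ (Fin k)) (a : MP n k) :
    tPart (graphMap φ a) = tauPart a - (1 / 2) * ∑ i : Fin k, φ a i * etaPart a i := by
  have : tPart (graphMap φ a) = tauPart a + 0 + (1 / 2) *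
      ∑ i : Fin n, (xPart (iota a) i * yPart (jmap (n := n) (φ a)) i
        - xPart (jmap (n := n) (φ a)) i * yPart (iota a) i) := rfl
  rw [this]
  have hy : ∀ i : Fin n, yPart (jmap (n := n) (φ a)) i = 0 := fun _ => rfl
  have hsum : ∑ i : Fin n, (xPart (iota a) i * yPart (jmap (n := n) (φ a)) i
      - xPart (jmap (n := n) (φ a)) i * yPart (iota a) i)
      = - ∑ i : Fin k, φ a i * etaPart a i := by
    rw [sum_split hk]
    have h1 : ∀ i : Fin k, xPart (iota a) (Fin.castLE hk i) * yPart (jmap (n := n) (φ a))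
        (Fin.castLE hk i) - xPart (jmap (n := n) (φ a)) (Fin.castLE hk i) *
        yPart (iota a) (Fin.castLE hk i) = -(φ a i * etaPart a i) := by
      intro i
      have h : ((Fin.castLE hk i : Fin n) : ℕ) < k := i.isLt
      rw [hy, show xPart (jmap (n := n) (φ a)) (Fin.castLE hk i) = φ a ⟨_, h⟩ from dif_pos h,
        show yPart (iota a) (Fin.castLE hk i) = etaPart a ⟨_, h⟩ from dif_pos h]
      simp
    have h2 : ∀ j : Fin (n - k), xPart (iota a) ⟨(j:ℕ)+k, by omega⟩ * yPart (jmap (n := n) (φ a))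
        ⟨(j:ℕ)+k, by omega⟩ - xPart (jmap (n := n) (φ a)) ⟨(j:ℕ)+k, by omega⟩ *
        yPart (iota a) ⟨(j:ℕ)+k, by omega⟩ = 0 := by
      intro j
      have h : ¬ ((⟨(j : ℕ) + k, by omega⟩ : Fin n) : ℕ) < k := by simp
      rw [hy, show xPart (jmap (n := n) (φ a)) ⟨(j:ℕ)+k, by omega⟩ = 0 from dif_neg h]
      ring
    rw [Finset.sum_congr rfl (fun i _ => h1 i), Finset.sum_congr rfl (fun j _ => h2 j)]
    simp [← Finset.sum_neg_distrib]
  rw [hsum]; ring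

end Graph
section PiMGraph

variable (hk : k ≤ n) (φ : MP n k → EuclideanSpace ℝ (Fin k)) (a b : MP n k)

lemma piM_graph_v (j : Fin (n - k)) :
    vPart (piM hk (hMul (hInv (graphMap φ a)) (graphMap φ b))) j = vPart b j - vPart a j := by
  show xPart (hMul (hInv (graphMap φ a)) (graphMap φ b)) ⟨(j : ℕ) + k, by omega⟩ = _
  rw [xPart_hMul, xPart_hInv, xPart_graphMap_hi hk, xPart_graphMap_hi hk]; ring

lemma piM_graph_eta (i : Fin k) :
    etaPart (piM hk (hMul (hInv (graphMap φ a)) (graphMap φ b))) i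
      = etaPart b i - etaPart a i := by
  show yPart (hMul (hInv (graphMap φ a)) (graphMap φ b)) (Fin.castLE hk i) = _
  rw [yPart_hMul, yPart_hInv, yPart_graphMap_lo hk, yPart_graphMap_lo hk]; ring

lemma piM_graph_w (j : Fin (n - k)) :
    wPart (piM hk (hMul (hInv (graphMap φ a)) (graphMap φ b))) j = wPart b j - wPart a j := by
  show yPart (hMul (hInv (graphMap φ a)) (graphMap φ b)) ⟨(j : ℕ) + k, by omega⟩ = _
  rw [yPart_hMul, yPart_hInv, yPart_graphMap_hi hk, yPart_graphMap_hi hk]; ring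

lemma piM_graph_tau :
    tauPart (piM hk (hMul (hInv (graphMap φ a)) (graphMap φ b)))
      = tauPart b - tauPart a - (∑ i : Fin k, φ a i * (etaPart b i - etaPart a i))
        - (1 / 2) * ∑ j : Fin (n - k), (vPart a j * wPart b j - vPart b j * wPart a j) := by
  set p := hMul (hInv (graphMap φ a)) (graphMap φ b) with hp
  have h0 : tauPart (piM hk p) = tPart p + (1 / 2) * ∑ i : Fin k,
      xPart p (Fin.castLE hk i) * yPart p (Fin.castLE hk i) := rfl
  have hx : ∀ i : Fin k, xPart p (Fin.castLE hk i) = φ b i - φ a i := by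
    intro i
    rw [hp, xPart_hMul, xPart_hInv, xPart_graphMap_lo hk, xPart_graphMap_lo hk]; ring
  have hy : ∀ i : Fin k, yPart p (Fin.castLE hk i) = etaPart b i - etaPart a i := by
    intro i
    rw [hp, yPart_hMul, yPart_hInv, yPart_graphMap_lo hk, yPart_graphMap_lo hk]; ring
  have ht : tPart p = tPart (graphMap φ b) - tPart (graphMap φ a)
      - (1 / 2) * ∑ i : Fin n, (xPart (graphMap φ a) i * yPart (graphMap φ b) i
          - xPart (graphMap φ b) i * yPart (graphMap φ a) i) := by
    rw [hp, tPart_hMul, tPart_hInv]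
    have : ∀ i : Fin n, xPart (hInv (graphMap φ a)) i * yPart (graphMap φ b) i
        - xPart (graphMap φ b) i * yPart (hInv (graphMap φ a)) i
        = -(xPart (graphMap φ a) i * yPart (graphMap φ b) i
          - xPart (graphMap φ b) i * yPart (graphMap φ a) i) := by
      intro i; rw [xPart_hInv, yPart_hInv]; ring
    rw [Finset.sum_congr rfl (fun i _ => this i), Finset.sum_neg_distrib]; ring
  have hsplit : ∑ i : Fin n, (xPart (graphMap φ a) i * yPart (graphMap φ b) i
      - xPart (graphMap φ b) i * yPart (graphMap φ a) i)
      = (∑ i : Fin k, (φ a i * etaPart b i - φ b i * etaPart a i))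
        + ∑ j : Fin (n - k), (vPart a j * wPart b j - vPart b j * wPart a j) := by
    rw [sum_split hk]
    congr 1
    · refine Finset.sum_congr rfl fun i _ => ?_
      rw [xPart_graphMap_lo hk, xPart_graphMap_lo hk, yPart_graphMap_lo hk,
        yPart_graphMap_lo hk]
    · refine Finset.sum_congr rfl fun j _ => ?_
      rw [xPart_graphMap_hi hk, xPart_graphMap_hi hk, yPart_graphMap_hi hk,
        yPart_graphMap_hi hk]
  rw [h0, ht, hsplit, tPart_graphMap hk, tPart_graphMap hk,
    Finset.sum_congr rfl (fun i _ => by rw [hx i, hy i] :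
      ∀ i ∈ Finset.univ, xPart p (Fin.castLE hk i) * yPart p (Fin.castLE hk i)
        = (φ b i - φ a i) * (etaPart b i - etaPart a i))]
  have e1 : ∑ i : Fin k, (φ b i - φ a i) * (etaPart b i - etaPart a i)
      = (∑ i : Fin k, φ b i * etaPart b i) - (∑ i : Fin k, φ b i * etaPart a i)
        - (∑ i : Fin k, φ a i * etaPart b i) + ∑ i : Fin k, φ a i * etaPart a i := by
    simp [sub_mul, mul_sub, Finset.sum_sub_distrib]; ring
  have e2 : ∑ i : Fin k, (φ a i * etaPart b i - φ b i * etaPart a i)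
      = (∑ i : Fin k, φ a i * etaPart b i) - ∑ i : Fin k, φ b i * etaPart a i := by
    simp [Finset.sum_sub_distrib]
  have e3 : ∑ i : Fin k, φ a i * (etaPart b i - etaPart a i)
      = (∑ i : Fin k, φ a i * etaPart b i) - ∑ i : Fin k, φ a i * etaPart a i := by
    simp [mul_sub, Finset.sum_sub_distrib]
  rw [e1, e2, e3]; ring

lemma dPhi_eq : dPhi hk φ b a = max
    (Real.sqrt (∑ j, (vPart b j - vPart a j) ^ 2 + ∑ i, (etaPart b i - etaPart a i) ^ 2 +
      ∑ j, (wPart b j - wPart a j) ^ 2))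
    (Real.sqrt |tauPart b - tauPart a - (∑ i : Fin k, φ a i * (etaPart b i - etaPart a i))
      - (1 / 2) * ∑ j : Fin (n - k), (vPart a j * wPart b j - vPart b j * wPart a j)|) := by
  show normM _ = _
  rw [normM, piM_graph_tau hk]
  have h1 : ∑ j, vPart (piM hk (hMul (hInv (graphMap φ a)) (graphMap φ b))) j ^ 2
      = ∑ j, (vPart b j - vPart a j) ^ 2 :=
    Finset.sum_congr rfl fun j _ => by rw [piM_graph_v hk]
  have h2 : ∑ i, etaPart (piM hk (hMul (hInv (graphMap φ a)) (graphMap φ b))) i ^ 2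
      = ∑ i, (etaPart b i - etaPart a i) ^ 2 :=
    Finset.sum_congr rfl fun i _ => by rw [piM_graph_eta hk]
  have h3 : ∑ j, wPart (piM hk (hMul (hInv (graphMap φ a)) (graphMap φ b))) j ^ 2
      = ∑ j, (wPart b j - wPart a j) ^ 2 :=
    Finset.sum_congr rfl fun j _ => by rw [piM_graph_w hk]
  rw [h1, h2, h3]

end PiMGraph
section Star

/-- Embedding of horizontal indices into all indices. -/
def embHor : HorIdx n k → MIdxT n k :=
  Sum.elim Sum.inl (Sum.elim (Sum.inr ∘ Sum.inl) (Sum.inr ∘ Sum.inr ∘ Sum.inl))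

lemma piHor_apply (a : MP n k) (m : HorIdx n k) : piHor a m = a (embHor m) := by
  rcases m with j | i | j <;> rfl

lemma piHor_Wfield (φ : MP n k → EuclideanSpace ℝ (Fin k)) (ℓ m : HorIdx n k) (p : MP n k) :
    piHor (Wfield φ ℓ p) m = if m = ℓ then 1 else 0 := by
  rcases ℓ with j | i | j <;> rcases m with j' | i' | j' <;>
    simp [Wfield, piHor, Pi.single_apply, eq_comm]

lemma tauPart_tauUnit : tauPart (tauUnit : MP n k) = 1 := rfl

lemma embHor_ne_tau (m : HorIdx n k) :
    (tauUnit : MP n k) (embHor m) = 0 := by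
  rcases m with j | i | j <;> rfl

lemma piHor_starMul_neg (a b : MP n k) (m : HorIdx n k) :
    piHor (starMul (-a) b) m = piHor b m - piHor a m := by
  rw [piHor_apply, piHor_apply, piHor_apply, starMul]
  rw [PiLp.add_apply, PiLp.add_apply, PiLp.smul_apply, PiLp.neg_apply, embHor_ne_tau]
  simp; ring

lemma ofMatrix_line (M : Matrix (Fin k) (HorIdx n k) ℝ) (a b : MP n k) (ℓ : HorIdx n k)
    (s : ℝ) (h : ∀ m, piHor b m = piHor a m + (if m = ℓ then s else 0)) :
    ofMatrix M (starMul (-a) b) = WithLp.toLp 2 (fun i => s * M i ℓ) := by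
  ext i
  show M.mulVec (piHor (starMul (-a) b)) i = _
  have hv : ∀ m, piHor (starMul (-a) b) m = if m = ℓ then s else 0 := by
    intro m; rw [piHor_starMul_neg, h m]; ring
  rw [Matrix.mulVec, dotProduct, Finset.sum_congr rfl
    (fun m _ => by rw [hv m] : ∀ m ∈ Finset.univ,
      M i m * piHor (starMul (-a) b) m = M i m * (if m = ℓ then s else 0))]
  simp [mul_ite, Finset.sum_ite_eq']
  ring

end Star

section ODE

lemma hasDerivAt_coord {γ : ℝ → MP n k} {g : MP n k} {s : ℝ} (h : HasDerivAt γ g s)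
    (idx : MIdxT n k) : HasDerivAt (fun r => γ r idx) (g idx) s := by
  have := (EuclideanSpace.proj (𝕜 := ℝ) idx).hasFDerivAt.comp_hasDerivAt s h
  exact this

lemma affine_of_deriv_const {f : ℝ → ℝ} {δ c : ℝ}
    (h : ∀ r ∈ Set.Ioo (-δ) δ, HasDerivAt f c r) {s : ℝ} (hs : s ∈ Set.Ioo (-δ) δ)
    (h0 : (0 : ℝ) ∈ Set.Ioo (-δ) δ) : f s = f 0 + s * c := by
  have hsub : Set.uIcc (0 : ℝ) s ⊆ Set.Ioo (-δ) δ := Set.ordConnected_Ioo.uIcc_subset h0 hs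
  have := intervalIntegral.integral_eq_sub_of_hasDerivAt
    (f := f) (f' := fun _ => c) (fun r hr => h r (hsub hr)) intervalIntegrable_const
  simp [intervalIntegral.integral_const, smul_eq_mul] at this
  linarith

lemma sub_eq_integral_of_deriv {f g : ℝ → ℝ} {δ : ℝ}
    (hd : ∀ r ∈ Set.Ioo (-δ) δ, HasDerivAt f (g r) r)
    (hc : ContinuousOn g (Set.Ioo (-δ) δ)) {s : ℝ} (hs : s ∈ Set.Ioo (-δ) δ)
    (h0 : (0 : ℝ) ∈ Set.Ioo (-δ) δ) : f s - f 0 = ∫ r in (0 : ℝ)..s, g r := by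
  have hsub : Set.uIcc (0 : ℝ) s ⊆ Set.Ioo (-δ) δ := Set.ordConnected_Ioo.uIcc_subset h0 hs
  rw [intervalIntegral.integral_eq_sub_of_hasDerivAt (fun r hr => hd r (hsub hr))
    ((hc.mono hsub).intervalIntegrable)]

end ODE
section Vert

lemma abs_coord_le (x : EuclideanSpace ℝ (Fin k)) (i : Fin k) : |x i| ≤ ‖x‖ := by
  rw [EuclideanSpace.norm_eq, show |x i| = Real.sqrt ((x i) ^ 2) by rw [Real.sqrt_sq_eq_abs]]
  apply Real.sqrt_le_sqrt
  calc (x i) ^ 2 = ‖x i‖ ^ 2 := by rw [Real.norm_eq_abs, sq_abs]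
    _ ≤ _ := Finset.single_le_sum (f := fun j => ‖x j‖ ^ 2) (fun j _ => sq_nonneg _)
      (Finset.mem_univ i)

/-- The tau index. -/
def tauIdx : MIdxT n k := Sum.inr (Sum.inr (Sum.inr ()))

lemma tauPart_eq (x : MP n k) : tauPart x = x tauIdx := rfl

variable {φ : MP n k → EuclideanSpace ℝ (Fin k)} {Ω : Set (MP n k)}

lemma curve_hor {δ : ℝ} {γ : ℝ → MP n k} {a : MP n k} {ℓ : HorIdx n k} (hγ0 : γ 0 = a)
    (hγd : ∀ s ∈ Set.Ioo (-δ) δ, HasDerivAt γ (Wfield φ ℓ (γ s)) s)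
    (m : HorIdx n k) {s : ℝ} (hs : s ∈ Set.Ioo (-δ) δ) (h0 : (0 : ℝ) ∈ Set.Ioo (-δ) δ) :
    piHor (γ s) m = piHor a m + s * (if m = ℓ then 1 else 0) := by
  rw [piHor_apply, piHor_apply]
  have := affine_of_deriv_const (f := fun r => γ r (embHor m))
    (c := if m = ℓ then 1 else 0) (fun r hr => by
      have h1 := hasDerivAt_coord (hγd r hr) (embHor m)
      rwa [show (Wfield φ ℓ (γ r)) (embHor m) = (if m = ℓ then 1 else 0) from
        (piHor_apply _ m).symm.trans (piHor_Wfield φ ℓ m _)] at h1) hs h0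
  simpa [hγ0] using this

lemma vert_bound (hφ : ContinuousOn φ Ω) {δ : ℝ} {γ : ℝ → MP n k} {a : MP n k}
    {ℓ : HorIdx n k} (hγ0 : γ 0 = a)
    (hmem : ∀ s ∈ Set.Ioo (-δ) δ, γ s ∈ Ω)
    (hγd : ∀ s ∈ Set.Ioo (-δ) δ, HasDerivAt γ (Wfield φ ℓ (γ s)) s)
    {s : ℝ} (hs : s ∈ Set.Ioo (-δ) δ) {C : ℝ} (hC : 0 ≤ C)
    (hb : ∀ r ∈ Set.uIoc 0 s, ‖φ (γ r) - φ a‖ ≤ C) :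
    |tauPart (γ s) - tauPart a - (∑ i : Fin k, φ a i * (etaPart (γ s) i - etaPart a i))
      - (1 / 2) * ∑ j : Fin (n - k),
          (vPart a j * wPart (γ s) j - vPart (γ s) j * wPart a j)| ≤ C * |s| := by
  have h0 : (0 : ℝ) ∈ Set.Ioo (-δ) δ := by
    constructor <;> [linarith [hs.1, hs.2]; linarith [hs.1, hs.2]]
  have hv : ∀ j : Fin (n - k), vPart (γ s) j
      = vPart a j + s * (if (Sum.inl j : HorIdx n k) = ℓ then 1 else 0) := fun j =>
    curve_hor hγ0 hγd (Sum.inl j) hs h0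
  have heta : ∀ i : Fin k, etaPart (γ s) i
      = etaPart a i + s * (if (Sum.inr (Sum.inl i) : HorIdx n k) = ℓ then 1 else 0) := fun i =>
    curve_hor hγ0 hγd (Sum.inr (Sum.inl i)) hs h0
  have hw : ∀ j : Fin (n - k), wPart (γ s) j
      = wPart a j + s * (if (Sum.inr (Sum.inr j) : HorIdx n k) = ℓ then 1 else 0) := fun j =>
    curve_hor hγ0 hγd (Sum.inr (Sum.inr j)) hs h0
  rcases ℓ with j₀ | i₀ | j₀
  · -- ℓ = W_j (v-direction): vertical part vanishes
    have hwc : ∀ r ∈ Set.Ioo (-δ) δ, ∀ j, wPart (γ r) j = wPart a j := by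
      intro r hr j
      have := curve_hor hγ0 hγd (Sum.inr (Sum.inr j)) hr h0
      simpa [piHor] using this
    have htau : tauPart (γ s) = tauPart a + s * (-(1 / 2) * wPart a j₀) := by
      have h2 := affine_of_deriv_const (f := fun r => γ r tauIdx) (c := -(1 / 2) * wPart a j₀)
        (fun r hr => by
          have h1 := hasDerivAt_coord (hγd r hr) tauIdx
          rwa [show (Wfield φ (Sum.inl j₀) (γ r)) tauIdx = -(1 / 2) * wPart (γ r) j₀ from rfl,
            hwc r hr j₀] at h1) hs h0
      simpa [tauPart_eq, hγ0] using h2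
    have hmid : ∑ i : Fin k, φ a i * (etaPart (γ s) i - etaPart a i) = 0 := by
      refine Finset.sum_eq_zero fun i _ => ?_
      rw [heta i]; simp
    have hlast : ∑ j : Fin (n - k), (vPart a j * wPart (γ s) j - vPart (γ s) j * wPart a j)
        = -(s * wPart a j₀) := by
      have : ∀ j : Fin (n - k), vPart a j * wPart (γ s) j - vPart (γ s) j * wPart a j
          = (if j = j₀ then -(s * wPart a j) else 0) := by
        intro j
        rw [hv j, hwc s hs j]
        by_cases h : j = j₀ <;> simp [h] <;> ring
      rw [Finset.sum_congr rfl fun j _ => this j]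
      simp
    rw [htau, hmid, hlast]
    have : tauPart a + s * (-(1 / 2) * wPart a j₀) - tauPart a - 0
        - 1 / 2 * -(s * wPart a j₀) = 0 := by ring
    rw [this]
    simp [abs_nonneg]
    positivity
  · -- ℓ = ∇^{φ_{i₀}} (η-direction)
    have hvc : ∀ r ∈ Set.Ioo (-δ) δ, ∀ j, vPart (γ r) j = vPart a j := by
      intro r hr j
      have := curve_hor hγ0 hγd (Sum.inl j) hr h0
      simpa [piHor] using this
    have hwc : ∀ r ∈ Set.Ioo (-δ) δ, ∀ j, wPart (γ r) j = wPart a j := by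
      intro r hr j
      have := curve_hor hγ0 hγd (Sum.inr (Sum.inr j)) hr h0
      simpa [piHor] using this
    have hγc : ContinuousOn γ (Set.Ioo (-δ) δ) := fun r hr =>
      (hγd r hr).continuousAt.continuousWithinAt
    have hgc : ContinuousOn (fun r => φ (γ r) i₀) (Set.Ioo (-δ) δ) := by
      have h1 : ContinuousOn (fun r => φ (γ r)) (Set.Ioo (-δ) δ) :=
        hφ.comp hγc fun r hr => hmem r hr
      exact ((EuclideanSpace.proj (𝕜 := ℝ) i₀).continuous.comp_continuousOn h1)
    have htau : tauPart (γ s) - tauPart a = ∫ r in (0 : ℝ)..s, φ (γ r) i₀ := by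
      have h2 := sub_eq_integral_of_deriv (f := fun r => γ r tauIdx)
        (g := fun r => φ (γ r) i₀) (fun r hr => hasDerivAt_coord (hγd r hr) tauIdx) hgc hs h0
      simpa [tauPart_eq, hγ0] using h2
    have hmid : ∑ i : Fin k, φ a i * (etaPart (γ s) i - etaPart a i) = s * φ a i₀ := by
      have : ∀ i : Fin k, φ a i * (etaPart (γ s) i - etaPart a i)
          = (if i = i₀ then s * φ a i else 0) := by
        intro i
        rw [heta i]
        by_cases h : i = i₀ <;> simp [h] <;> ring
      rw [Finset.sum_congr rfl fun i _ => this i]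
      simp
    have hlast : ∑ j : Fin (n - k), (vPart a j * wPart (γ s) j - vPart (γ s) j * wPart a j)
        = 0 := by
      refine Finset.sum_eq_zero fun j _ => ?_
      rw [hvc s hs j, hwc s hs j]; ring
    have hsub : Set.uIcc (0 : ℝ) s ⊆ Set.Ioo (-δ) δ := Set.ordConnected_Ioo.uIcc_subset h0 hs
    have hint : IntervalIntegrable (fun r => φ (γ r) i₀) MeasureTheory.volume 0 s :=
      (hgc.mono hsub).intervalIntegrable
    have hEq : tauPart (γ s) - tauPart a - (∑ i : Fin k, φ a i * (etaPart (γ s) i - etaPart a i))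
        - (1 / 2) * ∑ j : Fin (n - k),
            (vPart a j * wPart (γ s) j - vPart (γ s) j * wPart a j)
        = ∫ r in (0 : ℝ)..s, (φ (γ r) i₀ - φ a i₀) := by
      rw [hmid, hlast, intervalIntegral.integral_sub hint intervalIntegrable_const,
        intervalIntegral.integral_const, ← htau]
      simp [smul_eq_mul]
      try ring
    rw [hEq]
    have := intervalIntegral.norm_integral_le_of_norm_le_const
      (f := fun r => φ (γ r) i₀ - φ a i₀) (C := C) (a := 0) (b := s) (fun r hr => by
        rw [Real.norm_eq_abs]
        calc |φ (γ r) i₀ - φ a i₀| = |(φ (γ r) - φ a) i₀| := by rw [PiLp.sub_apply]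
          _ ≤ ‖φ (γ r) - φ a‖ := abs_coord_le _ _
          _ ≤ C := hb r hr)
    rw [Real.norm_eq_abs] at this
    simpa using this
  · -- ℓ = W_{n+j} (w-direction): vertical part vanishes
    have hvc : ∀ r ∈ Set.Ioo (-δ) δ, ∀ j, vPart (γ r) j = vPart a j := by
      intro r hr j
      have := curve_hor hγ0 hγd (Sum.inl j) hr h0
      simpa [piHor] using this
    have htau : tauPart (γ s) = tauPart a + s * ((1 / 2) * vPart a j₀) := by
      have h2 := affine_of_deriv_const (f := fun r => γ r tauIdx) (c := (1 / 2) * vPart a j₀)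
        (fun r hr => by
          have h1 := hasDerivAt_coord (hγd r hr) tauIdx
          rwa [show (Wfield φ (Sum.inr (Sum.inr j₀)) (γ r)) tauIdx
            = (1 / 2) * vPart (γ r) j₀ from rfl, hvc r hr j₀] at h1) hs h0
      simpa [tauPart_eq, hγ0] using h2
    have hmid : ∑ i : Fin k, φ a i * (etaPart (γ s) i - etaPart a i) = 0 := by
      refine Finset.sum_eq_zero fun i _ => ?_
      rw [heta i]; simp
    have hlast : ∑ j : Fin (n - k), (vPart a j * wPart (γ s) j - vPart (γ s) j * wPart a j)
        = s * vPart a j₀ := by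
      have : ∀ j : Fin (n - k), vPart a j * wPart (γ s) j - vPart (γ s) j * wPart a j
          = (if j = j₀ then s * vPart a j else 0) := by
        intro j
        rw [hw j, hvc s hs j]
        by_cases h : j = j₀ <;> simp [h] <;> ring
      rw [Finset.sum_congr rfl fun j _ => this j]
      simp
    rw [htau, hmid, hlast]
    have : tauPart a + s * (1 / 2 * vPart a j₀) - tauPart a - 0
        - 1 / 2 * (s * vPart a j₀) = 0 := by ring
    rw [this]
    simp [abs_nonneg]
    positivity

end Vert
section HorSum

lemma curve_horsum {φ : MP n k → EuclideanSpace ℝ (Fin k)} {δ : ℝ} {γ : ℝ → MP n k}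
    {a : MP n k} {ℓ : HorIdx n k} (hγ0 : γ 0 = a)
    (hγd : ∀ s ∈ Set.Ioo (-δ) δ, HasDerivAt γ (Wfield φ ℓ (γ s)) s)
    {s : ℝ} (hs : s ∈ Set.Ioo (-δ) δ) (h0 : (0 : ℝ) ∈ Set.Ioo (-δ) δ) :
    ∑ j, (vPart (γ s) j - vPart a j) ^ 2 + ∑ i, (etaPart (γ s) i - etaPart a i) ^ 2 +
      ∑ j, (wPart (γ s) j - wPart a j) ^ 2 = s ^ 2 := by
  have h1 : ∀ j : Fin (n - k), (vPart (γ s) j - vPart a j) ^ 2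
      = (if (Sum.inl j : HorIdx n k) = ℓ then s ^ 2 else 0) := by
    intro j
    rw [show vPart (γ s) j = vPart a j
      + s * (if (Sum.inl j : HorIdx n k) = ℓ then 1 else 0) from
      curve_hor hγ0 hγd (Sum.inl j) hs h0]
    split <;> ring
  have h2 : ∀ i : Fin k, (etaPart (γ s) i - etaPart a i) ^ 2
      = (if (Sum.inr (Sum.inl i) : HorIdx n k) = ℓ then s ^ 2 else 0) := by
    intro i
    rw [show etaPart (γ s) i = etaPart a i
      + s * (if (Sum.inr (Sum.inl i) : HorIdx n k) = ℓ then 1 else 0) from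
      curve_hor hγ0 hγd (Sum.inr (Sum.inl i)) hs h0]
    split <;> ring
  have h3 : ∀ j : Fin (n - k), (wPart (γ s) j - wPart a j) ^ 2
      = (if (Sum.inr (Sum.inr j) : HorIdx n k) = ℓ then s ^ 2 else 0) := by
    intro j
    rw [show wPart (γ s) j = wPart a j
      + s * (if (Sum.inr (Sum.inr j) : HorIdx n k) = ℓ then 1 else 0) from
      curve_hor hγ0 hγd (Sum.inr (Sum.inr j)) hs h0]
    split <;> ring
  rw [Finset.sum_congr rfl fun j _ => h1 j, Finset.sum_congr rfl fun i _ => h2 i,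
    Finset.sum_congr rfl fun j _ => h3 j]
  rcases ℓ with j₀ | i₀ | j₀ <;> simp

lemma uIoc_sub_Icc {s t : ℝ} (h : |s| ≤ t) : Set.uIoc 0 s ⊆ Set.Icc (-t) t := by
  rcases abs_le.mp h with ⟨hl, hr⟩
  refine Set.Subset.trans Set.Ioc_subset_Icc_self ?_
  exact Set.Icc_subset_Icc (le_min (by linarith) hl) (max_le (by linarith) hr)

end HorSum
/-- Corollary 4.11: if the continuous map `φ` is intrinsic
differentiable at `a ∈ Ω` with intrinsic Jacobian `M`, then for every
`ℓ = 1,…,2n-k` the `∂^{φ_ℓ}`-derivative of `φ` at `a` exists and equals the `ℓ`-th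
column of `M`; in particular the limit along integral curves of `W_ℓ^φ` through `a`
does not depend on the chosen curve. -/
theorem statement6 (n k : ℕ) (hn : 1 ≤ n) (hk1 : 1 ≤ k) (hk : k ≤ n)
    (Ω : Set (MP n k)) (hΩ : IsOpen Ω)
    (φ : MP n k → EuclideanSpace ℝ (Fin k)) (hφ : ContinuousOn φ Ω)
    (a : MP n k) (ha : a ∈ Ω)
    (M : Matrix (Fin k) (HorIdx n k) ℝ) (hdiff : IDAtWith hk Ω φ a M) :
    ∀ ℓ : HorIdx n k, HasWDerivAt Ω φ ℓ a (WithLp.toLp 2 (fun i => M i ℓ)) := by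
  intro ℓ δ hδ γ hγ0 hmem hγd
  set D : EuclideanSpace ℝ (Fin k) := WithLp.toLp 2 (fun i => M i ℓ) with hD
  have h0δ : (0 : ℝ) ∈ Set.Ioo (-δ) δ := by constructor <;> linarith
  -- step A: the intrinsic differentiability condition with ε = 1
  obtain ⟨δ₁, hδ₁pos, hP₁⟩ := hdiff 1 one_pos
  -- continuity of γ at 0
  have hγcont : ContinuousAt γ 0 := (hγd 0 h0δ).continuousAt
  obtain ⟨δ', hδ'pos, hδ'⟩ := Metric.continuousAt_iff.mp hγcont δ₁ hδ₁pos
  set t₀ : ℝ := min (δ' / 2) (δ / 2) with ht₀def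
  have ht₀pos : 0 < t₀ := lt_min (by linarith) (by linarith)
  have ht₀δ : t₀ < δ := lt_of_le_of_lt (min_le_right _ _) (by linarith)
  have ht₀ : ∀ r : ℝ, |r| ≤ t₀ → ‖γ r - a‖ < δ₁ := by
    intro r hr
    have : dist r 0 < δ' := by
      rw [Real.dist_eq, sub_zero]
      exact lt_of_le_of_lt hr (lt_of_le_of_lt (min_le_left _ _) (by linarith))
    have := hδ' this
    rwa [hγ0, dist_eq_norm] at this
  have hIoo : ∀ r : ℝ, |r| ≤ t₀ → r ∈ Set.Ioo (-δ) δ := by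
    intro r hr
    rcases abs_le.mp hr with ⟨h1, h2⟩
    exact ⟨by linarith, by linarith⟩
  -- the linear part along the curve
  have hlin : ∀ r : ℝ, r ∈ Set.Ioo (-δ) δ →
      ofMatrix M (starMul (-a) (γ r)) = WithLp.toLp 2 (fun i => r * M i ℓ) := by
    intro r hr
    refine ofMatrix_line M a (γ r) ℓ r fun m => ?_
    rw [curve_hor hγ0 hγd m hr h0δ]
    split <;> ring
  have hsmul : ∀ r : ℝ, WithLp.toLp 2 (fun i => r * M i ℓ) = r • D := by
    intro r
    ext i
    rw [PiLp.smul_apply, smul_eq_mul, hD]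
  -- the central bound on the graph distance along the curve
  set c₁ : ℝ := max 1 (Real.sqrt (2 * ‖D‖ + 3)) with hc₁def
  have hc₁one : (1 : ℝ) ≤ c₁ := le_max_left _ _
  have hc₁pos : 0 < c₁ := lt_of_lt_of_le one_pos hc₁one
  have key : ∀ s : ℝ, |s| ≤ t₀ → dPhi hk φ (γ s) a ≤ c₁ * |s| := by
    intro s hst₀
    set t : ℝ := |s| with htdef
    have ht0 : 0 ≤ t := abs_nonneg s
    have hsIoo : s ∈ Set.Ioo (-δ) δ := hIoo s hst₀
    have hIccsub : Set.Icc (-t) t ⊆ Set.Ioo (-δ) δ := by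
      intro r hr
      exact hIoo r (le_trans (abs_le.mpr ⟨hr.1, hr.2⟩) hst₀)
    set g : ℝ → ℝ := fun r => ‖φ (γ r) - φ a‖ with hgdef
    have hγc : ContinuousOn γ (Set.Ioo (-δ) δ) := fun r hr =>
      (hγd r hr).continuousAt.continuousWithinAt
    have hgc : ContinuousOn g (Set.Icc (-t) t) := by
      have h1 : ContinuousOn (fun r => φ (γ r)) (Set.Ioo (-δ) δ) :=
        hφ.comp hγc fun r hr => hmem r hr
      exact (((h1.sub continuousOn_const).norm).mono hIccsub)
    obtain ⟨r₀, hr₀mem, hr₀max⟩ := isCompact_Icc.exists_isMaxOn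
      (Set.nonempty_Icc.mpr (by linarith)) hgc
    set u : ℝ := g r₀ with hudef
    have hu0 : 0 ≤ u := norm_nonneg _
    have hbnd : ∀ r ∈ Set.Icc (-t) t, ‖φ (γ r) - φ a‖ ≤ u := fun r hr => hr₀max hr
    -- pointwise estimate on g
    have hgr : ∀ r ∈ Set.Icc (-t) t, g r ≤ (‖D‖ + 1) * t + Real.sqrt (t * u) := by
      intro r hr
      have hrIoo : r ∈ Set.Ioo (-δ) δ := hIccsub hr
      have hrabs : |r| ≤ t := abs_le.mpr ⟨hr.1, hr.2⟩
      have hvert := vert_bound hφ hγ0 hmem hγd hrIoo hu0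
        (fun ρ hρ => hbnd ρ (uIoc_sub_Icc hrabs hρ))
      have hdphi : dPhi hk φ (γ r) a ≤ t + Real.sqrt (t * u) := by
        rw [dPhi_eq hk, curve_horsum hγ0 hγd hrIoo h0δ, Real.sqrt_sq_eq_abs]
        apply max_le
        · exact le_add_of_le_of_nonneg hrabs (Real.sqrt_nonneg _)
        · refine le_add_of_nonneg_of_le ht0 (Real.sqrt_le_sqrt ?_)
          calc |tauPart (γ r) - tauPart a - (∑ i : Fin k, φ a i *
              (etaPart (γ r) i - etaPart a i)) - 1 / 2 * ∑ j : Fin (n - k),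
              (vPart a j * wPart (γ r) j - vPart (γ r) j * wPart a j)| ≤ u * |r| := hvert
            _ ≤ t * u := by nlinarith
      have h1 := hP₁ (γ r) (hmem r hrIoo) (ht₀ r (le_trans hrabs hst₀))
      have h2 : ‖ofMatrix M (starMul (-a) (γ r))‖ = |r| * ‖D‖ := by
        rw [hlin r hrIoo, hsmul r, norm_smul, Real.norm_eq_abs]
      calc g r = ‖(φ (γ r) - φ a - ofMatrix M (starMul (-a) (γ r)))
            + ofMatrix M (starMul (-a) (γ r))‖ := by rw [sub_add_cancel]
        _ ≤ ‖φ (γ r) - φ a - ofMatrix M (starMul (-a) (γ r))‖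
            + ‖ofMatrix M (starMul (-a) (γ r))‖ := norm_add_le _ _
        _ ≤ 1 * dPhi hk φ (γ r) a + |r| * ‖D‖ := by rw [h2]; exact add_le_add h1 le_rfl
        _ ≤ (t + Real.sqrt (t * u)) + t * ‖D‖ := by
            rw [one_mul]
            refine add_le_add hdphi (mul_le_mul_of_nonneg_right hrabs (norm_nonneg _))
        _ = (‖D‖ + 1) * t + Real.sqrt (t * u) := by ring
    -- self-improvement: bound on u
    have hu : u ≤ (2 * ‖D‖ + 3) * t := by
      have h1 : u ≤ (‖D‖ + 1) * t + Real.sqrt (t * u) := hgr r₀ hr₀mem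
      have h2 : Real.sqrt (t * u) ≤ (t + u) / 2 := by
        have h3 : t * u ≤ ((t + u) / 2) ^ 2 := by nlinarith [sq_nonneg (t - u)]
        calc Real.sqrt (t * u) ≤ Real.sqrt (((t + u) / 2) ^ 2) := Real.sqrt_le_sqrt h3
          _ = (t + u) / 2 := Real.sqrt_sq (by positivity)
      linarith
    -- final bound on dPhi at s
    have hvs := vert_bound hφ hγ0 hmem hγd hsIoo hu0
      (fun ρ hρ => hbnd ρ (uIoc_sub_Icc (le_refl t) hρ))
    rw [dPhi_eq hk, curve_horsum hγ0 hγd hsIoo h0δ, Real.sqrt_sq_eq_abs]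
    apply max_le
    · calc |s| = 1 * |s| := (one_mul _).symm
        _ ≤ c₁ * |s| := mul_le_mul_of_nonneg_right hc₁one ht0
    · calc Real.sqrt |tauPart (γ s) - tauPart a - (∑ i : Fin k, φ a i *
          (etaPart (γ s) i - etaPart a i)) - 1 / 2 * ∑ j : Fin (n - k),
          (vPart a j * wPart (γ s) j - vPart (γ s) j * wPart a j)|
          ≤ Real.sqrt ((2 * ‖D‖ + 3) * t ^ 2) := by
            refine Real.sqrt_le_sqrt ?_
            calc _ ≤ u * |s| := hvs
              _ ≤ (2 * ‖D‖ + 3) * t ^ 2 := by nlinarith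
        _ = Real.sqrt (2 * ‖D‖ + 3) * t := by
            rw [Real.sqrt_mul (by positivity), Real.sqrt_sq ht0]
        _ ≤ c₁ * |s| := mul_le_mul_of_nonneg_right (le_max_right _ _) ht0
  -- conclusion
  rw [Metric.tendsto_nhdsWithin_nhds]
  intro ε hε
  obtain ⟨δε, hδεpos, hPε⟩ := hdiff (ε / (2 * c₁)) (by positivity)
  obtain ⟨δ'', hδ''pos, hδ''⟩ := Metric.continuousAt_iff.mp hγcont δε hδεpos
  refine ⟨min (min δ'' t₀) t₀, lt_min (lt_min hδ''pos ht₀pos) ht₀pos, fun s hsne hdist => ?_⟩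
  have hst₀ : |s| ≤ t₀ := by
    rw [Real.dist_eq, sub_zero] at hdist
    exact le_of_lt (lt_of_lt_of_le hdist (min_le_right _ _))
  have hsδε : ‖γ s - a‖ < δε := by
    have : dist s 0 < δ'' := lt_of_lt_of_le hdist
      (le_trans (min_le_left _ _) (min_le_left _ _))
    have := hδ'' this
    rwa [hγ0, dist_eq_norm] at this
  have hsIoo : s ∈ Set.Ioo (-δ) δ := hIoo s hst₀
  have hsne' : s ≠ 0 := hsne
  have habs : 0 < |s| := abs_pos.mpr hsne'
  have h1 := hPε (γ s) (hmem s hsIoo) hsδε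
  rw [hlin s hsIoo, hsmul s] at h1
  have h2 : dist (s⁻¹ • (φ (γ s) - φ a)) D = |s|⁻¹ * ‖φ (γ s) - φ a - s • D‖ := by
    rw [dist_eq_norm, show s⁻¹ • (φ (γ s) - φ a) - D = s⁻¹ • (φ (γ s) - φ a - s • D) by
      simp [smul_sub, smul_smul, inv_mul_cancel₀ hsne'], norm_smul, norm_inv,
      Real.norm_eq_abs]
  calc dist (s⁻¹ • (φ (γ s) - φ a)) D = |s|⁻¹ * ‖φ (γ s) - φ a - s • D‖ := h2
    _ ≤ |s|⁻¹ * (ε / (2 * c₁) * (c₁ * |s|)) := by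
        refine mul_le_mul_of_nonneg_left ?_ (by positivity)
        exact le_trans h1 (mul_le_mul_of_nonneg_left (key s hst₀) (by positivity))
    _ = ε / 2 := by field_simp
    _ < ε := by linarith
end HeisGraph
end
end

section
/- Let Ω ⊂ ℝ^(2n+1−k) be open and φ : Ω → ℝ^k intrinsic Lipschitz with constant c > 0. Then ρ_φ(a,b) ≤ (1 + c)·d_φ(a,b) for all a, b ∈ Ω. -/
open scoped BigOperators
open MeasureTheory Filter Topology

noncomputable section

namespace HeisGraph

variable {n k : ℕ}

lemma sum_dite_split (hk : k ≤ n) (g : Fin k → ℝ) (h' : Fin (n - k) → ℝ) :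
    ∑ i : Fin n, (if h : (i : ℕ) < k then g ⟨i, h⟩ else h' ⟨(i:ℕ) - k, by have := i.isLt; omega⟩)
      = ∑ i, g i + ∑ j, h' j := by
  have hnk : k + (n - k) = n := by omega
  rw [← (finSumFinEquiv.trans (finCongr hnk)).sum_comp, Fintype.sum_sum_type]
  congr 1
  · apply Finset.sum_congr rfl; intro i _
    have h1 : (((finSumFinEquiv.trans (finCongr hnk)) (Sum.inl i)) : ℕ) = i := by
      simp [finSumFinEquiv]
    rw [dif_pos (h1 ▸ i.isLt)]
    congr 1
  · apply Finset.sum_congr rfl; intro j _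
    have h1 : (((finSumFinEquiv.trans (finCongr hnk)) (Sum.inr j)) : ℕ) = k + j := by
      simp [finSumFinEquiv]
    rw [dif_neg (by omega)]
    congr 1
    apply Fin.ext
    show (((finSumFinEquiv.trans (finCongr hnk)) (Sum.inr j) : Fin n) : ℕ) - k = (j : ℕ)
    omega


lemma vPart_comp (hk : k ≤ n) (φ : MP n k → EuclideanSpace ℝ (Fin k)) (a b : MP n k)
    (j : Fin (n - k)) :
    vPart (piM hk (hMul (hInv (graphMap φ b)) (graphMap φ a))) j = vPart a j - vPart b j := by
  simp [vPart, piM, mkM, hMul, mkH, xPart, yPart, tPart, hInv, graphMap, iota, jmap,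
    Nat.add_sub_cancel, neg_add_eq_sub]

lemma etaPart_comp (hk : k ≤ n) (φ : MP n k → EuclideanSpace ℝ (Fin k)) (a b : MP n k)
    (i : Fin k) :
    etaPart (piM hk (hMul (hInv (graphMap φ b)) (graphMap φ a))) i = etaPart a i - etaPart b i := by
  simp [etaPart, piM, mkM, hMul, mkH, xPart, yPart, tPart, hInv, graphMap, iota, jmap,
    Nat.add_sub_cancel, neg_add_eq_sub]

lemma wPart_comp (hk : k ≤ n) (φ : MP n k → EuclideanSpace ℝ (Fin k)) (a b : MP n k)
    (j : Fin (n - k)) :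
    wPart (piM hk (hMul (hInv (graphMap φ b)) (graphMap φ a))) j = wPart a j - wPart b j := by
  simp [wPart, piM, mkM, hMul, mkH, xPart, yPart, tPart, hInv, graphMap, iota, jmap,
    Nat.add_sub_cancel, neg_add_eq_sub]

lemma sum_split_of (hk : k ≤ n) (f : Fin n → ℝ) (F : Fin k → ℝ) (G : Fin (n - k) → ℝ)
    (hF : ∀ (x : Fin n) (h : (x : ℕ) < k), f x = F ⟨x, h⟩)
    (hG : ∀ (x : Fin n) (h : ¬ (x : ℕ) < k), f x = G ⟨(x : ℕ) - k, by have := x.isLt; omega⟩) :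
    ∑ x, f x = ∑ i, F i + ∑ j, G j := by
  rw [← sum_dite_split hk F G]
  apply Finset.sum_congr rfl
  intro x _
  by_cases h : (x : ℕ) < k
  · rw [dif_pos h]; exact hF x h
  · rw [dif_neg h]; exact hG x h

lemma tauPart_comp (hk : k ≤ n) (φ : MP n k → EuclideanSpace ℝ (Fin k)) (a b : MP n k) :
    tauPart (piM hk (hMul (hInv (graphMap φ b)) (graphMap φ a)))
      = tauPart a - tauPart b + ∑ i, φ b i * (etaPart b i - etaPart a i)
        + (1/2) * ∑ j, (vPart a j * wPart b j - vPart b j * wPart a j) := by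
  simp only [tauPart, piM, mkM, hMul, mkH, xPart, yPart, tPart, hInv, graphMap, iota, jmap,
    Sum.elim_inl, Sum.elim_inr, PiLp.neg_apply, mul_zero, zero_mul, add_zero, zero_add,
    zero_sub, sub_zero, mul_neg, neg_mul, neg_neg, sub_neg_eq_add, Fin.is_lt, dite_true]
  have eS : ∀ p : MP n k, (∑ x : Fin n,
      -((if hi : (x : ℕ) < k then φ p ⟨x, hi⟩ else 0) *
        if h : (x : ℕ) < k then etaPart p ⟨x, h⟩
          else wPart p ⟨(x : ℕ) - k, by have := x.isLt; omega⟩))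
      = -∑ i : Fin k, φ p i * etaPart p i := by
    intro p
    refine (sum_split_of hk _ (fun i => -(φ p i * etaPart p i)) (fun _ => 0) ?_ ?_).trans (by simp)
    · intro x h; rw [dif_pos h, dif_pos h]
    · intro x h; rw [dif_neg h, dif_neg h]; simp
  have e3 : (∑ x : Fin n,
      (-(((if h : (x : ℕ) < k then 0 else vPart b ⟨(x : ℕ) - k, by have := x.isLt; omega⟩) +
            if hi : (x : ℕ) < k then φ b ⟨x, hi⟩ else 0) *
          if h : (x : ℕ) < k then etaPart a ⟨x, h⟩
            else wPart a ⟨(x : ℕ) - k, by have := x.isLt; omega⟩) +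
        ((if h : (x : ℕ) < k then 0 else vPart a ⟨(x : ℕ) - k, by have := x.isLt; omega⟩) +
            if hi : (x : ℕ) < k then φ a ⟨x, hi⟩ else 0) *
          if h : (x : ℕ) < k then etaPart b ⟨x, h⟩
            else wPart b ⟨(x : ℕ) - k, by have := x.isLt; omega⟩))
      = (∑ i : Fin k, (-(φ b i * etaPart a i) + φ a i * etaPart b i)) +
        ∑ j : Fin (n - k), (-(vPart b j * wPart a j) + vPart a j * wPart b j) := by
    refine sum_split_of hk _ _ _ ?_ ?_
    · intro x h; rw [dif_pos h, dif_pos h, dif_pos h, dif_pos h, dif_pos h, dif_pos h]; ring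
    · intro x h; rw [dif_neg h, dif_neg h, dif_neg h, dif_neg h, dif_neg h, dif_neg h]; ring
  rw [eS a, eS b, e3]
  simp only [mul_add, add_mul, mul_sub, sub_mul, neg_mul, mul_neg, neg_neg, neg_add,
    Finset.sum_add_distrib, Finset.sum_sub_distrib, Finset.sum_neg_distrib, zero_add, add_zero,
    zero_mul, mul_zero]
  ring

theorem main_ineq (hn : 1 ≤ n) (hk1 : 1 ≤ k) (hk : k ≤ n)
    (Ω : Set (MP n k)) (φ : MP n k → EuclideanSpace ℝ (Fin k))
    (c : ℝ) (hc : 0 < c)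
    (hlip : ∀ a ∈ Ω, ∀ b ∈ Ω, ‖φ a - φ b‖ ≤ c * dPhi hk φ a b) :
    ∀ a ∈ Ω, ∀ b ∈ Ω, rhoPhi φ a b ≤ (1 + c) * dPhi hk φ a b := by
  intro a ha b hb
  set P := piM hk (hMul (hInv (graphMap φ b)) (graphMap φ a)) with hP
  set D := dPhi hk φ a b with hDdef
  have hDeq : D = max
      (Real.sqrt (∑ j, (vPart a j - vPart b j) ^ 2 + ∑ i, (etaPart a i - etaPart b i) ^ 2 +
        ∑ j, (wPart a j - wPart b j) ^ 2))
      (Real.sqrt |tauPart P|) := by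
    rw [hDdef, dPhi, normM, ← hP]
    simp only [hP, vPart_comp hk φ a b, etaPart_comp hk φ a b, wPart_comp hk φ a b]
  have hA1 : Real.sqrt (∑ j, (vPart a j - vPart b j) ^ 2 + ∑ i, (etaPart a i - etaPart b i) ^ 2 +
      ∑ j, (wPart a j - wPart b j) ^ 2) ≤ D := hDeq ▸ le_max_left _ _
  have hT1 : Real.sqrt |tauPart P| ≤ D := hDeq ▸ le_max_right _ _
  have hD0 : 0 ≤ D := le_trans (Real.sqrt_nonneg _) hT1
  have hT : |tauPart P| ≤ D ^ 2 := by
    have h1 := Real.sq_sqrt (abs_nonneg (tauPart P))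
    nlinarith [Real.sqrt_nonneg |tauPart P|]
  have hsum0 : ∀ (g : Fin (n - k) → ℝ), (0:ℝ) ≤ ∑ j, g j ^ 2 :=
    fun g => Finset.sum_nonneg fun j _ => sq_nonneg _
  have hEta : Real.sqrt (∑ i, (etaPart a i - etaPart b i) ^ 2) ≤ D := by
    refine le_trans (Real.sqrt_le_sqrt ?_) hA1
    have := hsum0 (fun j => vPart a j - vPart b j)
    have := hsum0 (fun j => wPart a j - wPart b j)
    linarith
  have hnorm : ‖φ a - φ b‖ = Real.sqrt (∑ i, (φ a i - φ b i) ^ 2) := by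
    rw [EuclideanSpace.norm_eq]
    congr 1
    refine Finset.sum_congr rfl fun i _ => ?_
    simp [Real.norm_eq_abs, sq_abs]
  have hCS : |∑ i, (φ a i - φ b i) * (etaPart b i - etaPart a i)| ≤
      ‖φ a - φ b‖ * Real.sqrt (∑ i, (etaPart a i - etaPart b i) ^ 2) := by
    rw [hnorm, ← Real.sqrt_mul_self (abs_nonneg _), ← Real.sqrt_mul (Finset.sum_nonneg
      fun i _ => sq_nonneg _)]
    apply Real.sqrt_le_sqrt
    have h2 : (∑ i, (etaPart a i - etaPart b i) ^ 2) = ∑ i, (etaPart b i - etaPart a i) ^ 2 := by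
      refine Finset.sum_congr rfl fun i _ => ?_; ring
    rw [abs_mul_abs_self, h2]
    have h6 := Finset.sum_mul_sq_le_sq_mul_sq Finset.univ (fun i => φ a i - φ b i)
      (fun i => etaPart b i - etaPart a i)
    nlinarith [h6]
  have hLip : ‖φ a - φ b‖ ≤ c * D := hlip a ha b hb
  have hrt : tauPart a - tauPart b +
      (1/2) * ∑ i, (φ a i + φ b i) * (etaPart b i - etaPart a i) +
      (1/2) * ∑ j, (vPart a j * wPart b j - vPart b j * wPart a j)
      = tauPart P + (1/2) * ∑ i, (φ a i - φ b i) * (etaPart b i - etaPart a i) := by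
    rw [hP, tauPart_comp hk φ a b]
    have hz : ∑ i : Fin k, ((1/2) * ((φ a i + φ b i) * (etaPart b i - etaPart a i))
        - φ b i * (etaPart b i - etaPart a i)
        - (1/2) * ((φ a i - φ b i) * (etaPart b i - etaPart a i))) = 0 := by
      rw [Finset.sum_eq_zero]; intro i _; ring
    rw [Finset.sum_sub_distrib, Finset.sum_sub_distrib, ← Finset.mul_sum, ← Finset.mul_sum] at hz
    linarith [hz]
  rw [rhoPhi, hrt]
  apply max_le
  · nlinarith [mul_nonneg hc.le hD0]
  · have habs : |tauPart P + (1/2) * ∑ i, (φ a i - φ b i) * (etaPart b i - etaPart a i)| ≤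
        ((1 + c) * D) ^ 2 := by
      have h3 := abs_add_le (tauPart P) ((1/2) * ∑ i, (φ a i - φ b i) * (etaPart b i - etaPart a i))
      have h4 : |(1/2 : ℝ) * ∑ i, (φ a i - φ b i) * (etaPart b i - etaPart a i)| =
          (1/2) * |∑ i, (φ a i - φ b i) * (etaPart b i - etaPart a i)| := by
        rw [abs_mul]; norm_num
      have h5 : ‖φ a - φ b‖ * Real.sqrt (∑ i, (etaPart a i - etaPart b i) ^ 2) ≤ (c * D) * D :=
        mul_le_mul hLip hEta (Real.sqrt_nonneg _) (by positivity)
      nlinarith [mul_nonneg (mul_nonneg hc.le hD0) hD0, sq_nonneg (c * D)]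
    calc Real.sqrt |tauPart P + (1/2) * ∑ i, (φ a i - φ b i) * (etaPart b i - etaPart a i)|
        ≤ Real.sqrt (((1 + c) * D) ^ 2) := Real.sqrt_le_sqrt habs
      _ = (1 + c) * D := Real.sqrt_sq (by positivity)

/-- Proposition 5.6: if `φ` is intrinsic Lipschitz with constant
`c > 0` on `Ω`, then `ρ_φ(a,b) ≤ (1 + c)·d_φ(a,b)` for all `a, b ∈ Ω`. -/
theorem statement12 (n k : ℕ) (hn : 1 ≤ n) (hk1 : 1 ≤ k) (hk : k ≤ n)
    (Ω : Set (MP n k)) (hΩ : IsOpen Ω)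
    (φ : MP n k → EuclideanSpace ℝ (Fin k)) (hφ : ContinuousOn φ Ω)
    (c : ℝ) (hc : 0 < c)
    (hlip : ∀ a ∈ Ω, ∀ b ∈ Ω, ‖φ a - φ b‖ ≤ c * dPhi hk φ a b) :
    ∀ a ∈ Ω, ∀ b ∈ Ω, rhoPhi φ a b ≤ (1 + c) * dPhi hk φ a b := by
  exact main_ineq hn hk1 hk Ω φ c hc hlip
end HeisGraph
end
end
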